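/- Every element of GSp₄(ℚ) lies in P(ℚ)·wⱼ·P(ℚ) for some j ∈ {1, 2, 3, 4}; that is, GSp₄(ℚ) = P(ℚ)w₁P(ℚ) ∪ P(ℚ)w₂P(ℚ) ∪ P(ℚ)w₃P(ℚ) ∪ P(ℚ)w₄P(ℚ). -/

import Mathlib

/-! STATEMENT 5: GSp₄(ℚ) = P(ℚ)w₁P(ℚ) ∪ P(ℚ)w₂P(ℚ) ∪ P(ℚ)w₃P(ℚ) ∪ P(ℚ)w₄P(ℚ). -/
open Matrix

noncomputable section

set_option maxHeartbeats 4000000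

/-- The 4×4 matrix with 2×2 blocks `[[A, B], [C, D]]`. -/
def blk {R : Type*} (A B C D : Matrix (Fin 2) (Fin 2) R) : Matrix (Fin 4) (Fin 4) R :=
  !![A 0 0, A 0 1, B 0 0, B 0 1;
     A 1 0, A 1 1, B 1 0, B 1 1;
     C 0 0, C 0 1, D 0 0, D 0 1;
     C 1 0, C 1 1, D 1 0, D 1 1]

/-- `J₂ = [[0, I₂], [−I₂, 0]] ∈ M₄(ℚ)`. -/
def J2 : Matrix (Fin 4) (Fin 4) ℚ := blk 0 1 (-1) 0

/-- Membership in `GSp₄(ℚ) = {g ∈ GL₄(ℚ) : gᵀ J₂ g = ν(g) J₂, ν(g) ∈ ℚˣ}`. -/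
def IsGSp4 (g : Matrix (Fin 4) (Fin 4) ℚ) : Prop :=
  IsUnit g ∧ ∃ ν : ℚ, ν ≠ 0 ∧ gᵀ * J2 * g = ν • J2

/-- The Weyl representatives `w₁ = I₄`, `w₂`, `w₃`, `w₄`. -/
def w1 : Matrix (Fin 4) (Fin 4) ℚ := 1

def w2 : Matrix (Fin 4) (Fin 4) ℚ :=
  !![0, 0, 1, 0;
     0, 1, 0, 0;
     -1, 0, 0, 0;
     0, 0, 0, 1]

def w3 : Matrix (Fin 4) (Fin 4) ℚ :=
  !![1, 0, 0, 0;
     0, 0, 0, 1;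
     0, 0, 1, 0;
     0, -1, 0, 0]

def w4 : Matrix (Fin 4) (Fin 4) ℚ :=
  !![0, 0, 1, 0;
     0, 0, 0, 1;
     1, 0, 0, 0;
     0, 1, 0, 0]

/-- Membership in the Siegel parabolic subgroup `P(ℚ)`: elements of `GSp₄(ℚ)` whose lower-left
2×2 block vanishes. -/
def memP (g : Matrix (Fin 4) (Fin 4) ℚ) : Prop :=
  IsGSp4 g ∧ g 2 0 = 0 ∧ g 2 1 = 0 ∧ g 3 0 = 0 ∧ g 3 1 = 0

/-! ### Auxiliary lemmas -/

theorem blk_mul' {R : Type*} [CommRing R] (A B C D A' B' C' D' : Matrix (Fin 2) (Fin 2) R) :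
    blk A B C D * blk A' B' C' D' =
      blk (A*A'+B*C') (A*B'+B*D') (C*A'+D*C') (C*B'+D*D') := by
  ext i j
  fin_cases i <;> fin_cases j <;>
    simp [blk, Matrix.mul_apply, Fin.sum_univ_four, Fin.sum_univ_two, vecHead, vecTail] <;> ring

theorem blk_transpose' {R : Type*} (A B C D : Matrix (Fin 2) (Fin 2) R) :
    (blk A B C D)ᵀ = blk Aᵀ Cᵀ Bᵀ Dᵀ := by
  ext i j
  fin_cases i <;> fin_cases j <;> simp [blk, vecHead, vecTail]

theorem blk_one' {R : Type*} [CommRing R] : blk (1 : Matrix (Fin 2) (Fin 2) R) 0 0 1 = 1 := by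
  ext i j
  fin_cases i <;> fin_cases j <;> simp [blk, Matrix.one_apply, vecHead, vecTail]

theorem isGSp4_mul {a b : Matrix (Fin 4) (Fin 4) ℚ} (ha : IsGSp4 a) (hb : IsGSp4 b) :
    IsGSp4 (a * b) := by
  obtain ⟨ua, νa, hνa, hra⟩ := ha
  obtain ⟨ub, νb, hνb, hrb⟩ := hb
  refine ⟨ua.mul ub, νa * νb, mul_ne_zero hνa hνb, ?_⟩
  rw [Matrix.transpose_mul]
  calc bᵀ * aᵀ * J2 * (a * b) = bᵀ * (aᵀ * J2 * a) * b := by noncomm_ring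
    _ = bᵀ * (νa • J2) * b := by rw [hra]
    _ = νa • (bᵀ * J2 * b) := by rw [Matrix.mul_smul, Matrix.smul_mul]
    _ = νa • (νb • J2) := by rw [hrb]
    _ = (νa * νb) • J2 := by rw [smul_smul]

theorem memP_mul {a b : Matrix (Fin 4) (Fin 4) ℚ} (ha : memP a) (hb : memP b) :
    memP (a * b) := by
  obtain ⟨ga, a20, a21, a30, a31⟩ := ha
  obtain ⟨gb, b20, b21, b30, b31⟩ := hb
  refine ⟨isGSp4_mul ga gb, ?_, ?_, ?_, ?_⟩ <;>
    simp [Matrix.mul_apply, Fin.sum_univ_four, a20, a21, a30, a31, b20, b21, b30, b31]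

theorem isUnit_of_mul_eq_one' {M N : Matrix (Fin 4) (Fin 4) ℚ} (h : M * N = 1) : IsUnit M :=
  ⟨⟨M, N, h, mul_eq_one_comm.mp h⟩, rfl⟩

theorem blk_apply20 (A B C D : Matrix (Fin 2) (Fin 2) ℚ) : blk A B C D 2 0 = C 0 0 := rfl
theorem blk_apply21 (A B C D : Matrix (Fin 2) (Fin 2) ℚ) : blk A B C D 2 1 = C 0 1 := rfl
theorem blk_apply30 (A B C D : Matrix (Fin 2) (Fin 2) ℚ) : blk A B C D 3 0 = C 1 0 := rfl
theorem blk_apply31 (A B C D : Matrix (Fin 2) (Fin 2) ℚ) : blk A B C D 3 1 = C 1 1 := rfl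

theorem unip_mul_unip (S : Matrix (Fin 2) (Fin 2) ℚ) :
    blk 1 S 0 1 * blk 1 (-S) 0 1 = 1 := by
  rw [blk_mul']
  have h1 : (1:Matrix (Fin 2) (Fin 2) ℚ)*1 + S*0 = 1 := by simp
  have h2 : (1:Matrix (Fin 2) (Fin 2) ℚ)*(-S) + S*1 = 0 := by simp
  have h3 : (0:Matrix (Fin 2) (Fin 2) ℚ)*1 + 1*0 = 0 := by simp
  have h4 : (0:Matrix (Fin 2) (Fin 2) ℚ)*(-S) + 1*1 = 1 := by simp
  rw [h1, h2, h3, h4, blk_one']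

theorem memP_unip (S : Matrix (Fin 2) (Fin 2) ℚ) (hS : Sᵀ = S) : memP (blk 1 S 0 1) := by
  refine ⟨⟨isUnit_of_mul_eq_one' (unip_mul_unip S), 1, one_ne_zero, ?_⟩,
    by simp [blk_apply20], by simp [blk_apply21], by simp [blk_apply30], by simp [blk_apply31]⟩
  rw [blk_transpose', transpose_one, transpose_zero, hS,
      show J2 = blk 0 1 (-1) 0 from rfl, blk_mul', blk_mul', one_smul]
  congr 1 <;> simp

theorem memP_diag (A D A' D' : Matrix (Fin 2) (Fin 2) ℚ)
    (h1 : A * A' = 1) (h2 : D * D' = 1) (h3 : Aᵀ * D = 1) : memP (blk A 0 0 D) := by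
  have h3' : Dᵀ * A = 1 := by
    have := congrArg Matrix.transpose h3
    rwa [Matrix.transpose_mul, Matrix.transpose_transpose, Matrix.transpose_one] at this
  refine ⟨⟨?_, 1, one_ne_zero, ?_⟩, by simp [blk_apply20], by simp [blk_apply21],
    by simp [blk_apply30], by simp [blk_apply31]⟩
  · apply isUnit_of_mul_eq_one' (N := blk A' 0 0 D')
    rw [blk_mul']
    have e1 : A*A' + 0*0 = (1:Matrix (Fin 2) (Fin 2) ℚ) := by simp [h1]
    have e2 : A*0+0*D' = (0:Matrix (Fin 2) (Fin 2) ℚ) := by simp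
    have e3 : (0:Matrix (Fin 2) (Fin 2) ℚ)*A'+D*0 = 0 := by simp
    have e4 : (0:Matrix (Fin 2) (Fin 2) ℚ)*0+D*D' = 1 := by simp [h2]
    rw [e1, e2, e3, e4, blk_one']
  · rw [blk_transpose', transpose_zero, show J2 = blk 0 1 (-1) 0 from rfl,
        blk_mul', blk_mul', one_smul]
    congr 1 <;> simp [h3, h3']

theorem w4_blk : w4 = blk 0 1 1 0 := by
  ext i j; fin_cases i <;> fin_cases j <;> simp [blk, w4, vecHead, vecTail]

theorem w2_blk : w2 = blk !![0,0;0,1] !![1,0;0,0] !![-1,0;0,0] !![0,0;0,1] := by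
  ext i j; fin_cases i <;> fin_cases j <;> simp [blk, w2, vecHead, vecTail]

theorem w2t_blk : w2ᵀ = blk !![0,0;0,1] !![-1,0;0,0] !![1,0;0,0] !![0,0;0,1] := by
  ext i j; fin_cases i <;> fin_cases j <;> simp [blk, w2, vecHead, vecTail]

theorem w4_mul_w4 : w4 * w4 = 1 := by
  ext i j; fin_cases i <;> fin_cases j <;>
    simp [w4, Matrix.mul_apply, Fin.sum_univ_four, Matrix.one_apply, vecHead, vecTail]

theorem w2_mul_w2t : w2 * w2ᵀ = 1 := by
  ext i j; fin_cases i <;> fin_cases j <;>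
    simp [w2, Matrix.mul_apply, Fin.sum_univ_four, Matrix.one_apply, vecHead, vecTail]

theorem isGSp4_w4 : IsGSp4 w4 := by
  refine ⟨isUnit_of_mul_eq_one' w4_mul_w4, -1, by norm_num, ?_⟩
  ext i j
  fin_cases i <;> fin_cases j <;>
    simp [w4, J2, blk, Matrix.mul_apply, Fin.sum_univ_four, vecHead, vecTail]

theorem isGSp4_w2t : IsGSp4 w2ᵀ := by
  refine ⟨isUnit_of_mul_eq_one' (mul_eq_one_comm.mp w2_mul_w2t), 1, one_ne_zero, ?_⟩
  ext i j
  fin_cases i <;> fin_cases j <;>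
    simp [w2, J2, blk, Matrix.mul_apply, Fin.sum_univ_four, vecHead, vecTail]

theorem memP_one : memP 1 := by
  refine ⟨⟨isUnit_one, 1, one_ne_zero, by simp⟩, ?_, ?_, ?_, ?_⟩ <;>
    simp [Matrix.one_apply]

theorem rank_one_normal (C : Matrix (Fin 2) (Fin 2) ℚ) (hC : C ≠ 0) (hdet : C.det = 0) :
    ∃ U U' V V' : Matrix (Fin 2) (Fin 2) ℚ,
      U * U' = 1 ∧ U' * U = 1 ∧ V * V' = 1 ∧ V' * V = 1 ∧ U * C * V = !![-1,0;0,0] := by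
  set c0 := C 0 0 with hc0
  set c1 := C 0 1 with hc1
  set c2 := C 1 0 with hc2
  set c3 := C 1 1 with hc3
  have hCe : C = !![c0, c1; c2, c3] := by
    ext i j; fin_cases i <;> fin_cases j <;> simp [hc0, hc1, hc2, hc3]
  have hdet' : c0 * c3 - c1 * c2 = 0 := by
    rw [Matrix.det_fin_two] at hdet; linarith [hdet]
  by_cases h0 : c0 = 0
  case neg =>
    refine ⟨!![-1/c0, 0; -c2/c0, 1], !![-c0, 0; -c2, 1], !![1, -c1/c0; 0, 1], !![1, c1/c0; 0, 1],
      ?_, ?_, ?_, ?_, ?_⟩ <;>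
    · ext i j
      fin_cases i <;> fin_cases j <;>
      · try rw [hCe]
        simp [Matrix.mul_apply, Fin.sum_univ_two, Matrix.one_apply, vecHead, vecTail]
        try field_simp
        try ring_nf
        try first
          | linear_combination hdet'
          | linear_combination -hdet'
          | linear_combination c0 * hdet'
          | linear_combination (1/c0) * hdet'
          | linear_combination -c0 * hdet'
          | linear_combination -(1/c0) * hdet'
  case pos =>
  by_cases h1 : c1 = 0
  case neg =>
    have hcc : c1 * c2 = 0 := by linear_combination -hdet' + c3 * h0
    have h2 : c2 = 0 := by
      rcases mul_eq_zero.mp hcc with h' | h'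
      · exact absurd h' h1
      · exact h'
    refine ⟨!![-1/c1, 0; -c3/c1, 1], !![-c1, 0; -c3, 1], !![0,1;1,0], !![0,1;1,0],
      ?_, ?_, ?_, ?_, ?_⟩ <;>
    · ext i j
      fin_cases i <;> fin_cases j <;>
      · try rw [hCe]
        simp [h0, h2, Matrix.mul_apply, Fin.sum_univ_two, Matrix.one_apply, vecHead, vecTail]
        try field_simp
        try ring
  case pos =>
  by_cases h2 : c2 = 0
  case neg =>
    refine ⟨!![0, -1/c2; 1, 0], !![0,1;-c2,0], !![1, -c3/c2; 0, 1], !![1, c3/c2; 0, 1],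
      ?_, ?_, ?_, ?_, ?_⟩ <;>
    · ext i j
      fin_cases i <;> fin_cases j <;>
      · try rw [hCe]
        simp [h0, h1, Matrix.mul_apply, Fin.sum_univ_two, Matrix.one_apply, vecHead, vecTail]
        try field_simp
        try ring_nf
  case pos =>
  have h3 : c3 ≠ 0 := by
    intro h3
    exact hC (by rw [hCe, h0, h1, h2, h3]; ext i j; fin_cases i <;> fin_cases j <;> simp)
  refine ⟨!![0, -1/c3; 1, 0], !![0,1;-c3,0], !![0,1;1,0], !![0,1;1,0],
    ?_, ?_, ?_, ?_, ?_⟩ <;>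
  · ext i j
    fin_cases i <;> fin_cases j <;>
    · try rw [hCe]
      simp [h0, h1, h2, Matrix.mul_apply, Fin.sum_univ_two, Matrix.one_apply, vecHead, vecTail]
      try field_simp

/-- Every element of `GSp₄(ℚ)` lies in `P(ℚ)·wⱼ·P(ℚ)` for some `j ∈ {1, 2, 3, 4}`. -/
theorem stmt5 (g : Matrix (Fin 4) (Fin 4) ℚ) (hg : IsGSp4 g) :
    ∃ w ∈ ({w1, w2, w3, w4} : Set (Matrix (Fin 4) (Fin 4) ℚ)),
      ∃ p p' : Matrix (Fin 4) (Fin 4) ℚ, memP p ∧ memP p' ∧ g = p * w * p' := by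
  obtain ⟨hu, ν, hν, hrel⟩ := hg
  set A := !![g 0 0, g 0 1; g 1 0, g 1 1] with hA
  set B := !![g 0 2, g 0 3; g 1 2, g 1 3] with hB
  set C := !![g 2 0, g 2 1; g 3 0, g 3 1] with hCd
  set D := !![g 2 2, g 2 3; g 3 2, g 3 3] with hD
  have hgblk : g = blk A B C D := by
    ext i j
    fin_cases i <;> fin_cases j <;> simp [blk, hA, hB, hCd, hD, vecHead, vecTail]
  by_cases hC0 : C = 0
  · -- rank 0 : g ∈ P
    refine ⟨w1, by simp, g, 1, ⟨⟨hu, ν, hν, hrel⟩, ?_, ?_, ?_, ?_⟩, memP_one, by simp [w1]⟩ <;>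
    · first
      | simpa [hCd] using congrFun (congrFun hC0 0) 0
      | simpa [hCd] using congrFun (congrFun hC0 0) 1
      | simpa [hCd] using congrFun (congrFun hC0 1) 0
      | simpa [hCd] using congrFun (congrFun hC0 1) 1
  by_cases hCdet : C.det = 0
  · -- rank 1
    obtain ⟨U, U', V, V', hUU', hU'U, hVV', hV'V, hUCV⟩ := rank_one_normal C hC0 hCdet
    have hpL : memP (blk U'ᵀ 0 0 U) :=
      memP_diag U'ᵀ U Uᵀ U'
        (by rw [← Matrix.transpose_mul, hUU', Matrix.transpose_one])
        hUU' (by rw [Matrix.transpose_transpose]; exact hU'U)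
    have hpR : memP (blk V 0 0 V'ᵀ) :=
      memP_diag V V'ᵀ V' Vᵀ hVV'
        (by rw [← Matrix.transpose_mul, hVV', Matrix.transpose_one])
        (by rw [← Matrix.transpose_mul, hV'V, Matrix.transpose_one])
    set h := blk U'ᵀ 0 0 U * g * blk V 0 0 V'ᵀ with hh
    have hhG : IsGSp4 h := isGSp4_mul (isGSp4_mul hpL.1 ⟨hu, ν, hν, hrel⟩) hpR.1
    set A₁ := U'ᵀ*A*V with hA₁
    set B₁ := U'ᵀ*B*V'ᵀ with hB₁
    set D₁ := U*D*V'ᵀ with hD₁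
    have hhblk : h = blk A₁ B₁ !![(-1:ℚ),0;0,0] D₁ := by
      rw [hh, hgblk, blk_mul', blk_mul', hA₁, hB₁, hD₁]
      simp only [Matrix.zero_mul, Matrix.mul_zero,  
        zero_add, add_zero, Matrix.one_mul, Matrix.mul_one, hUCV]
    obtain ⟨hhu, ν₁, hν₁, hrel₁⟩ := hhG
    have hb : A₁ 0 1 = 0 := by
      have e := congrFun (congrFun hrel₁ 0) 1
      rw [hhblk] at e
      simp [J2, blk, Matrix.mul_apply, Fin.sum_univ_four, vecHead, vecTail,
        Matrix.transpose_apply] at e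
      linarith [e]
    set S2 : Matrix (Fin 2) (Fin 2) ℚ := !![-(A₁ 0 0), 0; 0, 0] with hS2
    have hS2sym : S2ᵀ = S2 := by
      ext i j; fin_cases i <;> fin_cases j <;> simp [hS2]
    have hS2sym' : (-S2)ᵀ = -S2 := by rw [Matrix.transpose_neg, hS2sym]
    set k := w2ᵀ * (blk 1 (-S2) 0 1 * h) with hk
    have hkG : IsGSp4 k :=
      isGSp4_mul isGSp4_w2t (isGSp4_mul (memP_unip (-S2) hS2sym').1 ⟨hhu, ν₁, hν₁, hrel₁⟩)
    have hkzero : k 2 0 = 0 ∧ k 2 1 = 0 ∧ k 3 0 = 0 ∧ k 3 1 = 0 := by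
      rw [hk, hhblk, w2t_blk, blk_mul', blk_mul']
      refine ⟨?_, ?_, ?_, ?_⟩ <;>
      · simp only [blk_apply20, blk_apply21, blk_apply30, blk_apply31,
          Matrix.zero_mul, Matrix.mul_zero,  
          zero_add, add_zero, Matrix.one_mul, Matrix.mul_one]
        simp [hS2, Matrix.mul_apply, Matrix.add_apply, Matrix.neg_apply,
          Fin.sum_univ_two, vecHead, vecTail, Matrix.one_apply]
        try simp [Matrix.vecMul, dotProduct, Fin.sum_univ_two, Matrix.add_apply,
          Matrix.of_apply, Matrix.cons_val_zero, Matrix.cons_val_one, Matrix.head_cons,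
          vecHead, vecTail, ← hA₁, hb]
        try linear_combination hb
        try ring
    have hkP : memP k := ⟨hkG, hkzero.1, hkzero.2.1, hkzero.2.2.1, hkzero.2.2.2⟩
    have hhdec : h = blk 1 S2 0 1 * w2 * k := by
      rw [hk]
      calc h = (blk 1 S2 0 1 * blk 1 (-S2) 0 1) * h := by rw [unip_mul_unip, one_mul]
        _ = blk 1 S2 0 1 * ((w2 * w2ᵀ) * (blk 1 (-S2) 0 1 * h)) := by
            rw [w2_mul_w2t, one_mul]; noncomm_ring
        _ = blk 1 S2 0 1 * w2 * (w2ᵀ * (blk 1 (-S2) 0 1 * h)) := by noncomm_ring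
    have hgL : blk Uᵀ 0 0 U' * blk U'ᵀ 0 0 U = 1 := by
      rw [blk_mul']
      have e1 : Uᵀ*U'ᵀ + 0*0 = (1:Matrix (Fin 2) (Fin 2) ℚ) := by
        rw [← Matrix.transpose_mul, hU'U, Matrix.transpose_one]; simp
      have e2 : Uᵀ*0+0*U = (0:Matrix (Fin 2) (Fin 2) ℚ) := by simp
      have e3 : (0:Matrix (Fin 2) (Fin 2) ℚ)*U'ᵀ+U'*0 = 0 := by simp
      have e4 : (0:Matrix (Fin 2) (Fin 2) ℚ)*0+U'*U = 1 := by simp [hU'U]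
      rw [e1, e2, e3, e4, blk_one']
    have hgR : blk V 0 0 V'ᵀ * blk V' 0 0 Vᵀ = 1 := by
      rw [blk_mul']
      have e1 : V*V' + 0*0 = (1:Matrix (Fin 2) (Fin 2) ℚ) := by simp [hVV']
      have e2 : V*0+0*Vᵀ = (0:Matrix (Fin 2) (Fin 2) ℚ) := by simp
      have e3 : (0:Matrix (Fin 2) (Fin 2) ℚ)*V'+V'ᵀ*0 = 0 := by simp
      have e4 : (0:Matrix (Fin 2) (Fin 2) ℚ)*0+V'ᵀ*Vᵀ = 1 := by
        rw [← Matrix.transpose_mul, hVV', Matrix.transpose_one]; simp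
      rw [e1, e2, e3, e4, blk_one']
    have hpL' : memP (blk Uᵀ 0 0 U') :=
      memP_diag Uᵀ U' U'ᵀ U
        (by rw [← Matrix.transpose_mul, hU'U, Matrix.transpose_one]) hU'U
        (by rw [Matrix.transpose_transpose]; exact hUU')
    have hpR' : memP (blk V' 0 0 Vᵀ) :=
      memP_diag V' Vᵀ V V'ᵀ hV'V
        (by rw [← Matrix.transpose_mul, hV'V, Matrix.transpose_one])
        (by rw [← Matrix.transpose_mul, hVV', Matrix.transpose_one])
    refine ⟨w2, by simp, blk Uᵀ 0 0 U' * blk 1 S2 0 1, k * blk V' 0 0 Vᵀ,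
      memP_mul hpL' (memP_unip S2 hS2sym), memP_mul hkP hpR', ?_⟩
    have : g = blk Uᵀ 0 0 U' * h * blk V' 0 0 Vᵀ := by
      rw [hh]
      calc g = (blk Uᵀ 0 0 U' * blk U'ᵀ 0 0 U) * g * (blk V 0 0 V'ᵀ * blk V' 0 0 Vᵀ) := by
            rw [hgL, hgR, one_mul, mul_one]
        _ = blk Uᵀ 0 0 U' * (blk U'ᵀ 0 0 U * g * blk V 0 0 V'ᵀ) * blk V' 0 0 Vᵀ := by
            noncomm_ring
    rw [this, hhdec]
    noncomm_ring
  · -- rank 2 : C invertible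
    have hCu : IsUnit C.det := Ne.isUnit hCdet
    have hCC : C * C⁻¹ = 1 := Matrix.mul_nonsing_inv C hCu
    have hCC' : C⁻¹ * C = 1 := Matrix.nonsing_inv_mul C hCu
    have e01 : g 0 0 * g 2 1 + g 1 0 * g 3 1 - g 2 0 * g 0 1 - g 3 0 * g 1 1 = 0 := by
      have e := congrFun (congrFun hrel 0) 1
      simp [J2, blk, Matrix.mul_apply, Fin.sum_univ_four, vecHead, vecTail,
        Matrix.transpose_apply] at e
      linarith [e]
    have hsym : Aᵀ * C = Cᵀ * A := by
      ext i j
      fin_cases i <;> fin_cases j <;>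
        simp [hA, hCd, Matrix.mul_apply, Fin.sum_univ_two, vecHead, vecTail,
          Matrix.transpose_apply] <;>
        linarith [e01]
    have hSsym : (A * C⁻¹)ᵀ = A * C⁻¹ := by
      calc (A * C⁻¹)ᵀ = C⁻¹ᵀ * Aᵀ := by rw [Matrix.transpose_mul]
        _ = (Cᵀ)⁻¹ * Aᵀ := by rw [Matrix.transpose_nonsing_inv]
        _ = (Cᵀ)⁻¹ * Aᵀ * (C * C⁻¹) := by rw [hCC, mul_one]
        _ = (Cᵀ)⁻¹ * (Aᵀ * C) * C⁻¹ := by noncomm_ring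
        _ = (Cᵀ)⁻¹ * (Cᵀ * A) * C⁻¹ := by rw [hsym]
        _ = ((Cᵀ)⁻¹ * Cᵀ) * (A * C⁻¹) := by noncomm_ring
        _ = A * C⁻¹ := by
            rw [Matrix.nonsing_inv_mul _ (by simpa [Matrix.det_transpose] using hCu), one_mul]
    set S := A * C⁻¹ with hS
    have hSC : S * C = A := by rw [hS, Matrix.mul_assoc, hCC', mul_one]
    have hSsym' : (-S)ᵀ = -S := by rw [Matrix.transpose_neg, hSsym]
    set m := w4 * (blk 1 (-S) 0 1 * g) with hm
    have hmblk : m = blk C D 0 (B - S*D) := by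
      rw [hm, hgblk, w4_blk, blk_mul', blk_mul']
      congr 1 <;> simp [hSC] <;> abel
    have hmG : IsGSp4 m :=
      isGSp4_mul isGSp4_w4 (isGSp4_mul (memP_unip (-S) hSsym').1 ⟨hu, ν, hν, hrel⟩)
    have hmP : memP m := by
      refine ⟨hmG, ?_, ?_, ?_, ?_⟩ <;>
        simp [hmblk, blk_apply20, blk_apply21, blk_apply30, blk_apply31]
    refine ⟨w4, by simp, blk 1 S 0 1, m, memP_unip S hSsym, hmP, ?_⟩
    rw [hm]
    calc g = (blk 1 S 0 1 * blk 1 (-S) 0 1) * g := by rw [unip_mul_unip, one_mul]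
      _ = blk 1 S 0 1 * ((w4 * w4) * (blk 1 (-S) 0 1 * g)) := by
          rw [w4_mul_w4, one_mul]; noncomm_ring
      _ = blk 1 S 0 1 * w4 * (w4 * (blk 1 (-S) 0 1 * g)) := by noncomm_ring

end
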